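/- arXiv:1708.00191 — 3 statements merged into one kernel-verified Lean document; each statement's English description precedes it below -/
import Mathlib

section
/- Let n ≥ 1, γ ∈ ℝ, and T : ℝ → ℝ. Define F : ℝ^n → ℝ^n by F(y)_i = (1−γ)·T(y_i) + (γ/n)·∑_{j=1}^n T(y_j) for i = 1,…,n. If T is differentiable at each coordinate x_1, …, x_n of a point x ∈ ℝ^n, then F is differentiable at x and the determinant of its derivative satisfies det(DF(x)) = (1−γ)^{n−1} · ∏_{k=1}^n T'(x_k). -/
open Set

open Matrix in
lemma det_smul_one_add_smul_ones {n : ℕ} (hn : 1 ≤ n) (a b : ℝ) :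
    (a • (1 : Matrix (Fin n) (Fin n) ℝ) + b • Matrix.of (fun _ _ => (1:ℝ))).det
      = a ^ (n - 1) * (a + n * b) := by
  rcases eq_or_ne a 0 with rfl | ha
  · rcases eq_or_lt_of_le hn with h1 | h2
    · subst h1
      simp [Matrix.det_fin_one, Matrix.det_fin_one_of]
    · have h2' : 2 ≤ n := h2
      have : ((0:ℝ) • (1 : Matrix (Fin n) (Fin n) ℝ) + b • Matrix.of (fun _ _ => (1:ℝ))).det = 0 := by
        apply Matrix.det_zero_of_row_eq (i := ⟨0, by omega⟩) (j := ⟨1, by omega⟩)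
        · simp [Fin.ext_iff]
        · funext j; simp
      rw [this]
      have : n - 1 ≠ 0 := by omega
      simp [zero_pow this]
  · have key : a • (1 : Matrix (Fin n) (Fin n) ℝ) + b • Matrix.of (fun _ _ => (1:ℝ))
        = a • ((1 : Matrix (Fin n) (Fin n) ℝ) +
            Matrix.replicateCol Unit (fun _ => b/a) * Matrix.replicateRow Unit (fun _ => (1:ℝ))) := by
      ext i j
      simp [Matrix.mul_apply, Matrix.replicateCol, Matrix.replicateRow, Matrix.one_apply, mul_add,
        mul_div_cancel₀ _ ha]
    rw [key, Matrix.det_smul, Matrix.det_one_add_replicateCol_mul_replicateRow]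
    have : (fun _ : Fin n => (1:ℝ)) ⬝ᵥ (fun _ => b/a) = n * (b/a) := by
      simp [dotProduct]
    rw [this]
    have hn' : a ^ n = a ^ (n-1) * a := by
      conv_lhs => rw [show n = (n-1) + 1 by omega]
      ring
    rw [Fintype.card_fin, hn']
    field_simp

/-- The globally coupled map `F : ℝ^n → ℝ^n` built from a local map `T : ℝ → ℝ` with
coupling strength `γ`: `F(y)_i = (1-γ)·T(y_i) + (γ/n)·∑_j T(y_j)`. -/
noncomputable def coupledMap (n : ℕ) (γ : ℝ) (T : ℝ → ℝ) :
    (Fin n → ℝ) → (Fin n → ℝ) :=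
  fun y i => (1 - γ) * T (y i) + (γ / n) * ∑ j, T (y j)

/-- if `T` is differentiable at every coordinate of `x ∈ ℝ^n`, then the
globally coupled map `F` is differentiable at `x` and
`det DF(x) = (1−γ)^{n−1} · ∏_k T'(x_k)`. -/
theorem det_fderiv_coupledMap (n : ℕ) (hn : 1 ≤ n) (γ : ℝ) (T : ℝ → ℝ)
    (x : Fin n → ℝ) (hdiff : ∀ i : Fin n, DifferentiableAt ℝ T (x i)) :
    DifferentiableAt ℝ (coupledMap n γ T) x ∧
      (fderiv ℝ (coupledMap n γ T) x).det =
        (1 - γ) ^ (n - 1) * ∏ k : Fin n, deriv T (x k) := by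
  set d : Fin n → ℝ := fun i => deriv T (x i) with hd
  set A : Matrix (Fin n) (Fin n) ℝ :=
    Matrix.of (fun i j => (if i = j then (1-γ) * d j else 0) + (γ/n) * d j) with hA
  set L : (Fin n → ℝ) →L[ℝ] (Fin n → ℝ) :=
    LinearMap.toContinuousLinearMap (Matrix.toLin' A) with hL
  have hF : HasFDerivAt (coupledMap n γ T) L x := by
    apply hasFDerivAt_pi'.2
    intro i
    have h1 : HasFDerivAt (fun y : Fin n → ℝ => T (y i))
        (d i • ContinuousLinearMap.proj i) x :=
      (hdiff i).hasDerivAt.comp_hasFDerivAt x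
        (ContinuousLinearMap.proj i : (Fin n → ℝ) →L[ℝ] ℝ).hasFDerivAt
    have hs : HasFDerivAt (fun y : Fin n → ℝ => ∑ j, T (y j))
        (∑ j, d j • (ContinuousLinearMap.proj j : (Fin n → ℝ) →L[ℝ] ℝ)) x :=
      HasFDerivAt.fun_sum fun j _ =>
        (hdiff j).hasDerivAt.comp_hasFDerivAt x
          (ContinuousLinearMap.proj j : (Fin n → ℝ) →L[ℝ] ℝ).hasFDerivAt
    have hcomb := (h1.const_mul (1-γ)).add (hs.const_mul (γ/n))
    convert hcomb using 1
    · rfl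
    ext v
    simp only [ContinuousLinearMap.coe_comp', Function.comp_apply, hL,
      LinearMap.coe_toContinuousLinearMap', Matrix.toLin'_apply,
      ContinuousLinearMap.proj_apply, Matrix.mulVec, dotProduct, hA,
      Matrix.of_apply, add_mul, ite_mul, zero_mul, Finset.sum_add_distrib,
      Finset.sum_ite_eq, Finset.mem_univ, if_pos, ContinuousLinearMap.add_apply,
      ContinuousLinearMap.smul_apply, ContinuousLinearMap.coe_sum',
      Finset.sum_apply, Pi.smul_apply, smul_eq_mul, Finset.mul_sum]
    congr 1
    · ring
    · exact Finset.sum_congr rfl fun j _ => by ring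
  refine ⟨hF.differentiableAt, ?_⟩
  rw [hF.fderiv]
  have hdet : L.det = A.det := by
    rw [ContinuousLinearMap.det, hL, LinearMap.coe_toContinuousLinearMap,
      LinearMap.det_toLin']
  rw [hdet]
  have hfac : A = ((1-γ) • (1 : Matrix (Fin n) (Fin n) ℝ) +
      (γ/n) • Matrix.of (fun _ _ => (1:ℝ))) * Matrix.diagonal d := by
    ext i j
    simp [Matrix.mul_apply, Matrix.diagonal, Matrix.one_apply, hA,
      Finset.sum_ite_eq', ite_and]
    split <;> ring
  have hn0 : (n : ℝ) ≠ 0 := Nat.cast_ne_zero.2 (by omega)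
  rw [hfac, Matrix.det_mul, det_smul_one_add_smul_ones hn (1-γ) (γ/n),
    Matrix.det_diagonal]
  field_simp
  ring
end

section
/- Let n ≥ 1, γ ∈ ℝ, T : ℝ → ℝ, and let F : ℝ^n → ℝ^n be the globally coupled map built from T with coupling γ. Let p ≥ 1 and z ∈ ℝ^n, and suppose T is differentiable at every coordinate of every point F^t(z) for t = 0, 1, …, p−1. Then F^p is differentiable at z and det(D(F^p)(z)) = (1−γ)^{p(n−1)} · ∏_{t=0}^{p−1} ∏_{k=1}^n T'((F^t(z))_k). -/
open Set

lemma detA (n : ℕ) (hn : 1 ≤ n) (γ : ℝ) :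
    (Matrix.of fun i j : Fin n =>
      (1 - γ) * (if i = j then (1:ℝ) else 0) + γ / n).det = (1 - γ) ^ (n - 1) := by
  obtain ⟨m, rfl⟩ : ∃ m, n = m + 1 := ⟨n - 1, (Nat.succ_pred_eq_of_pos hn).symm⟩
  by_cases hγ : γ = 1
  · subst hγ
    rcases Nat.eq_zero_or_pos m with hm | hm
    · subst hm
      simp [Matrix.det_fin_one]
    · have h01 : (⟨0, by omega⟩ : Fin (m+1)) ≠ ⟨1, by omega⟩ := by
        simp [Fin.ext_iff]
      rw [Matrix.det_zero_of_row_eq h01 (by funext j; simp)]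
      rw [show (1:ℝ) - 1 = 0 by ring, zero_pow (by omega)]
  · have ha : (1:ℝ) - γ ≠ 0 := sub_ne_zero.mpr (Ne.symm hγ)
    have hn0 : ((m:ℝ) + 1) ≠ 0 := by positivity
    have key : (Matrix.of fun i j : Fin (m+1) =>
        (1 - γ) * (if i = j then (1:ℝ) else 0) + γ / (m+1)) =
        (1 - γ) • (1 + Matrix.replicateCol Unit (fun _ => γ / ((m+1) * (1 - γ))) *
          Matrix.replicateRow Unit (fun _ => (1:ℝ))) := by
      ext i j
      simp only [Matrix.of_apply, Matrix.smul_apply, Matrix.add_apply, Matrix.one_apply,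
        Matrix.mul_apply, Matrix.replicateCol_apply, Matrix.replicateRow_apply, Finset.univ_unique,
        Finset.sum_const, Finset.card_singleton, one_smul, smul_eq_mul, mul_one]
      by_cases h : i = j <;> simp only [h, if_pos, if_neg, ite_true, ite_false] <;>
        field_simp <;> ring
    rw [show (((m+1:ℕ):ℝ)) = (m:ℝ)+1 by push_cast; ring, key, Matrix.det_smul, Matrix.det_one_add_replicateCol_mul_replicateRow]
    simp [dotProduct, Finset.sum_const]
    field_simp
    ring

lemma coupledMap_step (n : ℕ) (hn : 1 ≤ n) (γ : ℝ) (T : ℝ → ℝ) (y : Fin n → ℝ)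
    (h : ∀ k, DifferentiableAt ℝ T (y k)) :
    ∃ L : (Fin n → ℝ) →L[ℝ] (Fin n → ℝ), HasFDerivAt (coupledMap n γ T) L y ∧
      L.det = (1 - γ) ^ (n - 1) * ∏ k, deriv T (y k) := by
  classical
  have hT : ∀ j : Fin n, HasFDerivAt (fun x : Fin n → ℝ => T (x j))
      (deriv T (y j) • ContinuousLinearMap.proj (R := ℝ) (φ := fun _ : Fin n => ℝ) j) y :=
    fun j => ((h j).hasDerivAt).comp_hasFDerivAt y
      (ContinuousLinearMap.proj (R := ℝ) (φ := fun _ : Fin n => ℝ) j).hasFDerivAt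
  set φ' : Fin n → (Fin n → ℝ) →L[ℝ] ℝ := fun i =>
    (1 - γ) • (deriv T (y i) • ContinuousLinearMap.proj i) +
      (γ / n) • ∑ j, deriv T (y j) • ContinuousLinearMap.proj j with hφ'
  refine ⟨ContinuousLinearMap.pi φ', ?_, ?_⟩
  · exact hasFDerivAt_pi.mpr fun i =>
      ((hT i).const_mul (1 - γ)).add ((HasFDerivAt.fun_sum fun j _ => hT j).const_mul (γ / n))
  · have hM : LinearMap.toMatrix' (↑(ContinuousLinearMap.pi φ') :
        (Fin n → ℝ) →ₗ[ℝ] (Fin n → ℝ)) =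
        (Matrix.of fun i j : Fin n => (1 - γ) * (if i = j then (1:ℝ) else 0) + γ / n) *
          Matrix.diagonal (fun j => deriv T (y j)) := by
      ext i j
      simp [LinearMap.toMatrix'_apply, Matrix.mul_diagonal, hφ',
        ContinuousLinearMap.proj_apply, Finset.mul_sum, mul_ite, Pi.single_apply]
      by_cases hij : i = j <;> simp [hij] <;> ring
    rw [ContinuousLinearMap.det, ← LinearMap.det_toMatrix', hM, Matrix.det_mul,
      detA n hn γ, Matrix.det_diagonal]

lemma coupledMap_iterate_step (n : ℕ) (hn : 1 ≤ n) (γ : ℝ) (T : ℝ → ℝ)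
    (p : ℕ) (z : Fin n → ℝ)
    (hdiff : ∀ t < p, ∀ k : Fin n,
      DifferentiableAt ℝ T (((coupledMap n γ T)^[t] z) k)) :
    ∃ L : (Fin n → ℝ) →L[ℝ] (Fin n → ℝ),
      HasFDerivAt ((coupledMap n γ T)^[p]) L z ∧
      L.det = (1 - γ) ^ (p * (n - 1)) *
        ∏ t ∈ Finset.range p, ∏ k : Fin n, deriv T (((coupledMap n γ T)^[t] z) k) := by
  induction p with
  | zero =>
    exact ⟨ContinuousLinearMap.id ℝ _, hasFDerivAt_id z,
      by simp [ContinuousLinearMap.det]⟩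
  | succ p ih =>
    obtain ⟨L, hL, hdet⟩ := ih (fun t ht k => hdiff t (by omega) k)
    obtain ⟨L', hL', hdet'⟩ :=
      coupledMap_step n hn γ T ((coupledMap n γ T)^[p] z) (hdiff p (by omega))
    refine ⟨L'.comp L, ?_, ?_⟩
    · rw [Function.iterate_succ']
      exact hL'.comp z hL
    · have hc : (L'.comp L).det = L'.det * L.det := by
        simp [ContinuousLinearMap.det, ContinuousLinearMap.coe_comp, LinearMap.det_comp]
      rw [hc, hdet, hdet', Finset.prod_range_succ, Nat.succ_mul, pow_add]
      ring

/-- if `T` is differentiable at every coordinate of every orbit point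
`F^t(z)`, `t = 0,…,p−1`, then `F^p` is differentiable at `z` and
`det D(F^p)(z) = (1−γ)^{p(n−1)} · ∏_{t<p} ∏_k T'((F^t(z))_k)`. -/
theorem det_fderiv_coupledMap_iterate (n : ℕ) (hn : 1 ≤ n) (γ : ℝ) (T : ℝ → ℝ)
    (p : ℕ) (hp : 1 ≤ p) (z : Fin n → ℝ)
    (hdiff : ∀ t < p, ∀ k : Fin n,
      DifferentiableAt ℝ T (((coupledMap n γ T)^[t] z) k)) :
    DifferentiableAt ℝ ((coupledMap n γ T)^[p]) z ∧
      (fderiv ℝ ((coupledMap n γ T)^[p]) z).det =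
        (1 - γ) ^ (p * (n - 1)) *
          ∏ t ∈ Finset.range p, ∏ k : Fin n, deriv T (((coupledMap n γ T)^[t] z) k) := by
  obtain ⟨L, hL, hdet⟩ := coupledMap_iterate_step n hn γ T p z hdiff
  exact ⟨hL.differentiableAt, by rw [hL.fderiv]; exact hdet⟩
end

section
/- Let n ≥ 1, λ ∈ (0,1), γ ∈ [0,1), T : ℝ → ℝ, and let F : ℝ^n → ℝ^n be the globally coupled map built from T with coupling γ. Let p ≥ 1 and z ∈ ℝ^n, and suppose that T is differentiable at every coordinate of every point F^t(z) for t = 0, 1, …, p−1, with |T'| ≥ 1/λ at each such coordinate. Then |det(D(F^p)(z))| ≥ ((1−γ)^n · λ^{−n} / (1−γ))^p. In particular, if λ < 1 − γ then |det(D(F^p)(z))| ≥ r^{np}/(1−γ)^p with r = (1−γ)/λ > 1. -/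
open Set

open Matrix

/-- The Jacobian matrix of the coupled map at a point with local derivatives `c`. -/
noncomputable def cmMat (n : ℕ) (γ : ℝ) (c : Fin n → ℝ) : Matrix (Fin n) (Fin n) ℝ :=
  Matrix.of fun i j => ((1 - γ) * (if i = j then 1 else 0) + γ / n) * c j

lemma cmMat_det (n : ℕ) (hn : 1 ≤ n) (γ : ℝ) (hγ : 1 - γ ≠ 0) (c : Fin n → ℝ) :
    (cmMat n γ c).det = (1 - γ) ^ n / (1 - γ) * ∏ j, c j := by
  have hn0 : (n : ℝ) ≠ 0 := Nat.cast_ne_zero.2 (by omega)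
  have h1 : cmMat n γ c =
      ((1 - γ) • (1 + Matrix.replicateCol Unit (fun _ : Fin n => γ / (n * (1 - γ))) * Matrix.replicateRow Unit (1 : Fin n → ℝ))) *
        Matrix.diagonal c := by
    ext i j
    simp only [cmMat, Matrix.of_apply, Matrix.mul_apply, Matrix.diagonal_apply,
      Matrix.smul_apply, Matrix.add_apply, Matrix.one_apply, Matrix.replicateCol_apply,
      Matrix.replicateRow_apply, Pi.one_apply, smul_eq_mul, Finset.sum_ite_eq', Finset.mem_univ, if_true,
      mul_ite, ite_mul, mul_zero, zero_mul, mul_one, Finset.univ_unique, Finset.sum_const,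
      Finset.card_singleton, one_smul]
    have key : (1 - γ) * (γ / (↑n * (1 - γ))) = γ / ↑n := by field_simp
    split <;> [skip; skip] <;> field_simp <;> ring
  rw [h1, Matrix.det_mul, Matrix.det_smul, Matrix.det_one_add_replicateCol_mul_replicateRow, Matrix.det_diagonal]
  have : (1 : Fin n → ℝ) ⬝ᵥ (fun _ => γ / (n * (1 - γ))) = γ / (1 - γ) := by
    simp [dotProduct]
    field_simp
  rw [this]
  have : (1 : ℝ) + γ / (1 - γ) = 1 / (1 - γ) := by field_simp; ring
  rw [this]
  simp only [Fintype.card_fin]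
  ring

lemma hasFDerivAt_coupledMap (n : ℕ) (γ : ℝ) (T : ℝ → ℝ) (y : Fin n → ℝ)
    (h : ∀ k, DifferentiableAt ℝ T (y k)) :
    HasFDerivAt (coupledMap n γ T)
      (LinearMap.toContinuousLinearMap
        (Matrix.toLin' (cmMat n γ (fun k => deriv T (y k))))) y := by
  apply hasFDerivAt_pi''
  intro i
  have hcomp : ∀ j : Fin n, HasFDerivAt (fun w : Fin n → ℝ => T (w j))
      (deriv T (y j) • (ContinuousLinearMap.proj j : (Fin n → ℝ) →L[ℝ] ℝ)) y :=
    fun j => (h j).hasDerivAt.comp_hasFDerivAt y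
      ((ContinuousLinearMap.proj j : (Fin n → ℝ) →L[ℝ] ℝ).hasFDerivAt)
  have h2 := ((hcomp i).const_mul (1 - γ)).add
    ((HasFDerivAt.fun_sum (fun j (_ : j ∈ Finset.univ) => hcomp j)).const_mul (γ / n))
  refine h2.congr_fderiv ?_
  ext v
  simp [cmMat, Matrix.toLin'_apply, Matrix.mulVec, dotProduct, Finset.mul_sum,
    add_mul, mul_add, Finset.sum_add_distrib, mul_ite, ite_mul, mul_zero, zero_mul,
    Finset.sum_ite_eq, mul_comm, mul_assoc, mul_left_comm]

lemma exists_hasFDerivAt_iterate (n : ℕ) (hn : 1 ≤ n) (lam γ : ℝ)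
    (hlam : lam ∈ Ioo (0:ℝ) 1) (hγ : γ ∈ Ico (0:ℝ) 1) (T : ℝ → ℝ) (z : Fin n → ℝ) :
    ∀ p : ℕ, (∀ t < p, ∀ k : Fin n,
        DifferentiableAt ℝ T (((coupledMap n γ T)^[t] z) k)) →
      (∀ t < p, ∀ k : Fin n, 1 / lam ≤ |deriv T (((coupledMap n γ T)^[t] z) k)|) →
      ∃ L : (Fin n → ℝ) →L[ℝ] (Fin n → ℝ),
        HasFDerivAt ((coupledMap n γ T)^[p]) L z ∧
        ((1 - γ) ^ n * (lam⁻¹) ^ n / (1 - γ)) ^ p ≤ |L.det| := by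
  have hγ1 : (0:ℝ) < 1 - γ := by linarith [hγ.2]
  have hlam0 : (0:ℝ) < lam := hlam.1
  have hc1 : (0:ℝ) < (1 - γ) ^ n / (1 - γ) := by positivity
  have hc0 : (0:ℝ) ≤ (1 - γ) ^ n * (lam⁻¹) ^ n / (1 - γ) := by positivity
  intro p
  induction p with
  | zero =>
    intro _ _
    refine ⟨ContinuousLinearMap.id ℝ _, ?_, ?_⟩
    · rw [Function.iterate_zero]
      exact hasFDerivAt_id z
    · simp [ContinuousLinearMap.det]
  | succ p ih =>
    intro hd hb
    obtain ⟨L, hL, hdet⟩ := ih (fun t ht => hd t (ht.trans (Nat.lt_succ_self p)))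
      (fun t ht => hb t (ht.trans (Nat.lt_succ_self p)))
    set y := (coupledMap n γ T)^[p] z with hy
    set A := LinearMap.toContinuousLinearMap
      (Matrix.toLin' (cmMat n γ (fun k => deriv T (y k)))) with hA
    have hAd : HasFDerivAt (coupledMap n γ T) A y :=
      hasFDerivAt_coupledMap n γ T y (hd p (Nat.lt_succ_self p))
    have hcomp : HasFDerivAt ((coupledMap n γ T)^[p+1]) (A.comp L) z := by
      rw [Function.iterate_succ']
      exact hAd.comp z hL
    refine ⟨A.comp L, hcomp, ?_⟩
    have hdc : (A.comp L).det = A.det * L.det := by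
      simp only [ContinuousLinearMap.det, ContinuousLinearMap.coe_comp, LinearMap.det_comp]
      exact LinearMap.det_comp _ _
    have hAdet : A.det = (1 - γ) ^ n / (1 - γ) * ∏ k, deriv T (y k) := by
      rw [ContinuousLinearMap.det, LinearMap.coe_toContinuousLinearMap,
        LinearMap.det_toLin', cmMat_det n hn γ (ne_of_gt hγ1)]
    have hstep : (1 - γ) ^ n * (lam⁻¹) ^ n / (1 - γ) ≤ |A.det| := by
      rw [hAdet, abs_mul, abs_of_pos hc1, Finset.abs_prod]
      have hprod : (lam⁻¹) ^ n ≤ ∏ k, |deriv T (y k)| := by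
        calc (lam⁻¹) ^ n = ∏ _k : Fin n, lam⁻¹ := by
              simp
          _ ≤ ∏ k, |deriv T (y k)| := by
              refine Finset.prod_le_prod (fun k _ => by positivity) (fun k _ => ?_)
              simpa [one_div] using hb p (Nat.lt_succ_self p) k
      calc (1 - γ) ^ n * (lam⁻¹) ^ n / (1 - γ)
          = (1 - γ) ^ n / (1 - γ) * (lam⁻¹) ^ n := by ring
        _ ≤ (1 - γ) ^ n / (1 - γ) * ∏ k, |deriv T (y k)| :=
            mul_le_mul_of_nonneg_left hprod (le_of_lt hc1)
    rw [hdc, abs_mul, pow_succ, mul_comm |A.det| _]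
    exact mul_le_mul hdet hstep hc0 (abs_nonneg _)

/-- if `|T'| ≥ 1/λ` at every coordinate of every orbit point
`F^t(z)`, `t = 0,…,p−1`, then `|det D(F^p)(z)| ≥ ((1−γ)^n·λ^{−n}/(1−γ))^p`; in
particular, if `λ < 1−γ` then `|det D(F^p)(z)| ≥ r^{np}/(1−γ)^p` where
`r = (1−γ)/λ > 1`. -/
theorem abs_det_fderiv_coupledMap_iterate_ge (n : ℕ) (hn : 1 ≤ n)
    (lam γ : ℝ) (hlam : lam ∈ Ioo (0:ℝ) 1) (hγ : γ ∈ Ico (0:ℝ) 1)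
    (T : ℝ → ℝ) (p : ℕ) (hp : 1 ≤ p) (z : Fin n → ℝ)
    (hdiff : ∀ t < p, ∀ k : Fin n,
      DifferentiableAt ℝ T (((coupledMap n γ T)^[t] z) k))
    (hexp : ∀ t < p, ∀ k : Fin n,
      1 / lam ≤ |deriv T (((coupledMap n γ T)^[t] z) k)|) :
    ((1 - γ) ^ n * (lam⁻¹) ^ n / (1 - γ)) ^ p ≤
        |(fderiv ℝ ((coupledMap n γ T)^[p]) z).det| ∧
      (lam < 1 - γ →
        (1 < (1 - γ) / lam ∧
          ((1 - γ) / lam) ^ (n * p) / (1 - γ) ^ p ≤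
            |(fderiv ℝ ((coupledMap n γ T)^[p]) z).det|)) := by
  obtain ⟨L, hL, hdet⟩ :=
    exists_hasFDerivAt_iterate n hn lam γ hlam hγ T z p hdiff hexp
  rw [hL.fderiv]
  refine ⟨hdet, fun hlt => ⟨(one_lt_div hlam.1).2 hlt, ?_⟩⟩
  have heq : ((1 - γ) / lam) ^ (n * p) / (1 - γ) ^ p
      = ((1 - γ) ^ n * (lam⁻¹) ^ n / (1 - γ)) ^ p := by
    rw [pow_mul, ← div_pow]
    congr 1
    rw [div_pow, div_eq_mul_inv ((1-γ)^n), ← inv_pow]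
  rw [heq]
  exact hdet
end
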